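/- For every $q \in (0,1]$ and every $x > 0$, $(x + x^{-1})^q \ge x^q + x^{-q} - 2(1-q)$. -/

import Mathlib

open Real

-- Key scalar fact: `q ≤ 2 ^ (q - 1)` for `q ≤ 1`.
lemma aux_q_le (q : ℝ) (hq1 : q ≤ 1) : q ≤ (2 : ℝ) ^ (q - 1) := by
  have h1 : (2 : ℝ) ^ (q - 1) = Real.exp (Real.log 2 * (q - 1)) := by
    rw [Real.rpow_def_of_pos (by norm_num)]
  have h2 : Real.log 2 * (q - 1) + 1 ≤ Real.exp (Real.log 2 * (q - 1)) :=
    Real.add_one_le_exp _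
  have h3 : Real.log 2 ≤ 1 := by
    have := Real.log_le_sub_one_of_pos (x := 2) (by norm_num)
    linarith
  have h4 : 0 < Real.log 2 := Real.log_pos (by norm_num)
  nlinarith [h2, h1.ge]

-- Main inequality assuming `1 ≤ x`.
lemma aux_main (q x : ℝ) (hq0 : 0 < q) (hq1 : q ≤ 1) (hx : 1 ≤ x) :
    x ^ q + x ^ (-q) - 2 * (1 - q) ≤ (x + x⁻¹) ^ q := by
  have hx0 : 0 < x := lt_of_lt_of_le one_pos hx
  have hm0 : 0 < x⁻¹ := inv_pos.mpr hx0
  have hm1 : x⁻¹ ≤ 1 := inv_le_one_of_one_le₀ hx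
  set T : ℝ := x + x⁻¹ with hT
  have hT0 : 0 < T := by positivity
  -- Bernoulli A : x ^ (-q) ≤ 1 - q + q * x⁻¹
  have hA : x ^ (-q) ≤ 1 - q + q * x⁻¹ := by
    have := rpow_one_add_le_one_add_mul_self (s := x⁻¹ - 1) (by linarith)
      (p := q) hq0.le hq1
    have hxq : x ^ (-q) = (1 + (x⁻¹ - 1)) ^ q := by
      rw [show (1 : ℝ) + (x⁻¹ - 1) = x⁻¹ by ring, Real.inv_rpow hx0.le,
        ← Real.rpow_neg hx0.le]
    rw [hxq]
    linarith
  -- Bernoulli B : x ^ q + q * x⁻¹ * T ^ (q - 1) ≤ T ^ q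
  have hB : x ^ q + q * x⁻¹ * T ^ (q - 1) ≤ T ^ q := by
    have hs : -1 ≤ x / T - 1 := by
      have : 0 < x / T := div_pos hx0 hT0
      linarith
    have hber := rpow_one_add_le_one_add_mul_self hs hq0.le hq1
    rw [show (1 : ℝ) + (x / T - 1) = x / T by ring] at hber
    have hxT : x ^ q = (x / T) ^ q * T ^ q := by
      rw [← Real.mul_rpow (by positivity) hT0.le, div_mul_cancel₀]
      exact hT0.ne'
    have hTpow : 0 < T ^ q := Real.rpow_pos_of_pos hT0 q
    have hfrac : x / T - 1 = -(x⁻¹ / T) := by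
      rw [hT]
      field_simp
      ring
    have hTsub : T ^ (q - 1) = T ^ q / T := Real.rpow_sub_one hT0.ne' q
    have : x ^ q ≤ (1 + q * (x / T - 1)) * T ^ q := by
      rw [hxT]
      exact mul_le_mul_of_nonneg_right hber hTpow.le
    rw [hfrac] at this
    have hexp : (1 + q * -(x⁻¹ / T)) * T ^ q = T ^ q - q * x⁻¹ * (T ^ q / T) := by
      field_simp
      ring
    rw [hexp] at this
    rw [hTsub]
    linarith
  -- base comparison: 2 ^ (q-1) * x ^ (q-1) ≤ T ^ (q-1)
  have hC : (2 : ℝ) ^ (q - 1) * x ^ (q - 1) ≤ T ^ (q - 1) := by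
    have hle : T ≤ 2 * x := by
      have : x⁻¹ ≤ x := le_trans hm1 hx
      simp only [hT]; linarith
    have := Real.rpow_le_rpow_of_nonpos hT0 hle (by linarith : q - 1 ≤ 0)
    rwa [Real.mul_rpow (by norm_num) hx0.le] at this
  -- relation: x ^ (q-1) * x ^ (-q) = x⁻¹
  have hrel : x ^ (q - 1) * x ^ (-q) = x⁻¹ := by
    rw [← Real.rpow_add hx0, show q - 1 + -q = -1 by ring, Real.rpow_neg_one]
  -- positivity facts
  have hv0 : 0 < x ^ (q - 1) := Real.rpow_pos_of_pos hx0 _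
  have hb0 : 0 < x ^ (-q) := Real.rpow_pos_of_pos hx0 _
  have hK : q ≤ (2 : ℝ) ^ (q - 1) := aux_q_le q hq1
  have hK0 : 0 < (2 : ℝ) ^ (q - 1) := Real.rpow_pos_of_pos (by norm_num) _
  -- from hA and hrel : x⁻¹ ≤ x ^ (q-1) * (1 - q + q * x⁻¹)
  have hvD : x⁻¹ ≤ x ^ (q - 1) * (1 - q + q * x⁻¹) := by
    calc x⁻¹ = x ^ (q - 1) * x ^ (-q) := hrel.symm
    _ ≤ x ^ (q - 1) * (1 - q + q * x⁻¹) :=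
        mul_le_mul_of_nonneg_left hA hv0.le
  -- suffices : x ^ (-q) - 2 * (1 - q) ≤ q * x⁻¹ * (2 ^ (q-1) * x ^ (q-1))
  have key : x ^ (-q) - 2 * (1 - q) ≤ q * x⁻¹ * ((2 : ℝ) ^ (q - 1) * x ^ (q - 1)) := by
    nlinarith [mul_le_mul_of_nonneg_left hvD (by positivity : (0:ℝ) ≤ q * (2:ℝ) ^ (q-1) * x⁻¹),
      mul_le_mul_of_nonneg_right hK (by positivity : (0:ℝ) ≤ q * x⁻¹ * x⁻¹),
      sq_nonneg (1 - q), mul_pos hm0 hm0, mul_pos hq0 hm0]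
  have hstep : q * x⁻¹ * ((2 : ℝ) ^ (q - 1) * x ^ (q - 1)) ≤ q * x⁻¹ * T ^ (q - 1) :=
    mul_le_mul_of_nonneg_left hC (by positivity)
  linarith

theorem stmt_3 (q x : ℝ) (hq0 : 0 < q) (hq1 : q ≤ 1) (hx : 0 < x) :
    x ^ q + x ^ (-q) - 2 * (1 - q) ≤ (x + x⁻¹) ^ q := by
  rcases le_total 1 x with h | h
  · exact aux_main q x hq0 hq1 h
  · have hx1 : 1 ≤ x⁻¹ := (one_le_inv₀ hx).mpr h
    have := aux_main q x⁻¹ hq0 hq1 hx1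
    have e1 : (x⁻¹) ^ q = x ^ (-q) := by
      rw [Real.inv_rpow hx.le, Real.rpow_neg hx.le]
    have e2 : (x⁻¹) ^ (-q) = x ^ q := by
      rw [Real.inv_rpow hx.le, Real.rpow_neg hx.le, inv_inv]
    rw [e1, e2, inv_inv, add_comm x⁻¹ x] at this
    linarith
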